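/- (Leave-one-dyad-out shortcut for two-step kernel ridge regression, Setting A.) Let K be an m×m and G a q×q symmetric positive definite real matrix with mq ≥ 2, Y ∈ ℝ^{m×q}, λ_d, λ_t > 0, and let Ξ = (G ⊗ K)(λ_dλ_t I + λ_t(I ⊗ K) + λ_d(G ⊗ I))⁻¹ and H^{TS} = Ξ(Ξ + I)⁻¹. Then H^{TS} = (G(G+λ_t I)⁻¹) ⊗ (K(K+λ_d I)⁻¹), and for every dyad index s (corresponding to instance i and task j), letting Ξ^{(s)}, y^{(s)}, ξ_s denote Ξ with row and column s deleted, vec(Y) with entry s deleted, and row s of Ξ with entry s deleted respectively, one has ξ_sᵀ (Ξ^{(s)} + I)⁻¹ y^{(s)} = (H^{TS}_{s·} vec(Y) − H^{TS}_{ss} Y_{ij}) / (1 − H^{TS}_{ss}). -/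

import Mathlib

open Matrix Kronecker

set_option linter.unusedSectionVars false
set_option maxHeartbeats 1000000

open Matrix Kronecker

section Helpers

variable {n m : Type*} [Fintype n] [Fintype m] [DecidableEq n] [DecidableEq m]

lemma myPosDef_smul {A : Matrix n n ℝ} (hA : A.PosDef) {c : ℝ} (hc : 0 < c) :
    (c • A).PosDef := by
  refine Matrix.PosDef.of_dotProduct_mulVec_pos ?_ fun x hx => ?_
  · unfold Matrix.IsHermitian
    rw [conjTranspose_smul, hA.1.eq, star_trivial]
  · rw [smul_mulVec, dotProduct_smul]
    exact mul_pos hc (by simpa using hA.dotProduct_mulVec_pos hx)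

lemma myPosDef_tmul_self {C : Matrix n n ℝ} (hC : IsUnit C) : (Cᵀ * C).PosDef := by
  refine Matrix.PosDef.of_dotProduct_mulVec_pos
    (by simpa using isHermitian_conjTranspose_mul_self C) fun x hx => ?_
  have h1 : star x ⬝ᵥ (Cᵀ * C) *ᵥ x = (C *ᵥ x) ⬝ᵥ (C *ᵥ x) := by
    rw [star_trivial, ← mulVec_mulVec, dotProduct_mulVec, vecMul_transpose]
  have hCx : C *ᵥ x ≠ 0 := by
    intro h
    apply hx
    have h2 := congrArg (fun v => C⁻¹ *ᵥ v) h
    simpa [mulVec_mulVec, Matrix.nonsing_inv_mul C ((Matrix.isUnit_iff_isUnit_det C).mp hC)]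
      using h2
  rw [h1]
  simpa using dotProduct_star_self_pos_iff.mpr hCx

open scoped MatrixOrder in
lemma myPosDef_factor {A : Matrix n n ℝ} (hA : A.PosDef) :
    ∃ C : Matrix n n ℝ, IsUnit C ∧ A = Cᵀ * C := by
  have h : CFC.sqrt A * CFC.sqrt A = A := CFC.sqrt_mul_sqrt_self A hA.posSemidef.nonneg
  have hunit : IsUnit (CFC.sqrt A) := by
    rw [Matrix.isUnit_iff_isUnit_det]
    have hdet : IsUnit ((CFC.sqrt A).det * (CFC.sqrt A).det) := by
      rw [← Matrix.det_mul, h]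
      exact (Matrix.isUnit_iff_isUnit_det A).mp hA.isUnit
    exact isUnit_of_mul_isUnit_left hdet
  refine ⟨CFC.sqrt A, hunit, ?_⟩
  have ht : (CFC.sqrt A)ᵀ = CFC.sqrt A :=
    (CFC.sqrt_nonneg A).posSemidef.isHermitian.eq
  rw [ht, h]

lemma myPosDef_kron {A : Matrix n n ℝ} {B : Matrix m m ℝ} (hA : A.PosDef) (hB : B.PosDef) :
    (A ⊗ₖ B).PosDef := by
  obtain ⟨C, hC, hCe⟩ := myPosDef_factor hA
  obtain ⟨D, hD, hDe⟩ := myPosDef_factor hB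
  rw [hCe, hDe, Matrix.mul_kronecker_mul]
  have ht : Cᵀ ⊗ₖ Dᵀ = (C ⊗ₖ D)ᵀ := (Matrix.kroneckerMap_transpose _ _ _).symm
  rw [ht]
  apply myPosDef_tmul_self
  rw [Matrix.isUnit_iff_isUnit_det, Matrix.det_kronecker]
  exact (((Matrix.isUnit_iff_isUnit_det C).mp hC).pow _).mul
    (((Matrix.isUnit_iff_isUnit_det D).mp hD).pow _)

lemma myPosDef_submatrix {A : Matrix n n ℝ} (hA : A.PosDef) (f : m → n)
    (hf : Function.Injective f) : (A.submatrix f f).PosDef := by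
  refine Matrix.PosDef.of_dotProduct_mulVec_pos ?_ fun x hx => ?_
  · unfold Matrix.IsHermitian
    rw [conjTranspose_submatrix, hA.1.eq]
  · set x' : n → ℝ := Function.extend f x 0 with hx'
    have hxf : ∀ k, x' (f k) = x k := fun k => hf.extend_apply x 0 k
    have key : ∀ g : n → ℝ, (∑ i, x' i * g i) = ∑ k, x k * g (f k) := by
      intro g
      have h1 : (∑ i ∈ Finset.univ.image f, x' i * g i) = ∑ k, x' (f k) * g (f k) :=
        Finset.sum_image (fun a _ b _ h => hf h)
      have h2 : (∑ i, x' i * g i) = ∑ i ∈ Finset.univ.image f, x' i * g i := by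
        symm
        apply Finset.sum_subset (Finset.subset_univ _)
        intro i _ hi
        have hni : ¬ ∃ k, f k = i := by
          rintro ⟨k, rfl⟩
          exact hi (Finset.mem_image.mpr ⟨k, Finset.mem_univ _, rfl⟩)
        have hzero : x' i = 0 := by
          rw [hx', Function.extend_apply' x _ _ hni]
          rfl
        simp [hzero]
      rw [h2, h1]
      exact Finset.sum_congr rfl fun k _ => by rw [hxf]
    have hx0 : x' ≠ 0 := by
      intro h
      apply hx
      funext k
      have := congrFun h (f k)
      simpa [hxf k] using this
    have hpos := hA.dotProduct_mulVec_pos hx0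
    rw [star_trivial] at hpos
    have heq : x' ⬝ᵥ A *ᵥ x' = x ⬝ᵥ (A.submatrix f f) *ᵥ x := by
      show (∑ i, x' i * (A *ᵥ x') i) = ∑ k, x k * ((A.submatrix f f) *ᵥ x) k
      rw [key (fun i => (A *ᵥ x') i)]
      refine Finset.sum_congr rfl fun k _ => ?_
      congr 1
      show (∑ j, A (f k) j * x' j) = ∑ j, A (f k) (f j) * x j
      rw [show (∑ j, A (f k) j * x' j) = ∑ j, x' j * A (f k) j from
        Finset.sum_congr rfl fun j _ => mul_comm _ _, key (fun j => A (f k) j)]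
      exact Finset.sum_congr rfl fun j _ => mul_comm _ _
    rw [star_trivial, ← heq]
    exact hpos

lemma myPosDef_diag {A : Matrix n n ℝ} (hA : A.PosDef) (i : n) : 0 < A i i := by
  have h := hA.dotProduct_mulVec_pos (x := Pi.single i 1) (by
    intro h
    have := congrFun h i
    simp at this)
  simpa [dotProduct, mulVec, Pi.single_apply, mul_comm] using h

lemma mySum_split {α : Type*} [Fintype α] [DecidableEq α] (s : α) (f : α → ℝ) :
    (∑ t, f t) = f s + ∑ t : {x : α // x ≠ s}, f t.val := by
  rw [← Finset.add_sum_erase Finset.univ f (Finset.mem_univ s)]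
  congr 1
  exact Finset.sum_subtype _ (by simp) f

end Helpers


/-- `vec` stacks the columns of a matrix into a single (column) vector, so the dyad
index `s = mj + i` corresponds to the pair `(j, i)` and `vec Y (j, i) = Y i j`. -/
def vecCols {m q : ℕ} (X : Matrix (Fin m) (Fin q) ℝ) : Fin q × Fin m → ℝ :=
  fun p => X p.2 p.1

/-- leave-one-dyad-out shortcut for two-step KRR, Setting A:
with `Ξ = (G ⊗ K)(λ_dλ_t I + λ_t(I ⊗ K) + λ_d(G ⊗ I))⁻¹` and `H^{TS} = Ξ(Ξ + I)⁻¹`,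
one has `H^{TS} = (G(G+λ_t I)⁻¹) ⊗ (K(K+λ_d I)⁻¹)`, and for every dyad `s = (j, i)`,
KRR with pairwise kernel matrix `Ξ` and regularization `1` trained on the other
`mq − 1` dyads predicts `(H^{TS}_{s·} vec(Y) − H^{TS}_{ss} Y_{ij}) / (1 − H^{TS}_{ss})`
at dyad `s`. -/
theorem two_step_krr_stmt14 {m q : ℕ} (hmq : 2 ≤ m * q)
    (K : Matrix (Fin m) (Fin m) ℝ) (hK : K.PosDef)
    (G : Matrix (Fin q) (Fin q) ℝ) (hG : G.PosDef)
    (Y : Matrix (Fin m) (Fin q) ℝ) (ld lt : ℝ) (hld : 0 < ld) (hlt : 0 < lt)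
    (Ξ : Matrix (Fin q × Fin m) (Fin q × Fin m) ℝ)
    (hΞ : Ξ = (G ⊗ₖ K) *
      ((ld * lt) • 1 + lt • ((1 : Matrix (Fin q) (Fin q) ℝ) ⊗ₖ K)
        + ld • (G ⊗ₖ (1 : Matrix (Fin m) (Fin m) ℝ)))⁻¹)
    (H : Matrix (Fin q × Fin m) (Fin q × Fin m) ℝ) (hH : H = Ξ * (Ξ + 1)⁻¹) :
    H = (G * (G + lt • 1)⁻¹) ⊗ₖ (K * (K + ld • 1)⁻¹) ∧
    ∀ s : Fin q × Fin m,
      ∀ Ξdel : Matrix {x : Fin q × Fin m // x ≠ s} {x : Fin q × Fin m // x ≠ s} ℝ,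
        Ξdel = Ξ.submatrix (fun x => x.val) (fun x => x.val) →
      ∀ ydel : {x : Fin q × Fin m // x ≠ s} → ℝ, ydel = (fun x => vecCols Y x.val) →
      ∀ ξs : {x : Fin q × Fin m // x ≠ s} → ℝ, ξs = (fun x => Ξ s x.val) →
        ξs ⬝ᵥ ((Ξdel + 1)⁻¹ *ᵥ ydel)
          = ((H *ᵥ vecCols Y) s - H s s * Y s.2 s.1) / (1 - H s s) := by
  -- abbreviations
  set P : Matrix (Fin q × Fin m) (Fin q × Fin m) ℝ := G ⊗ₖ K with hPdef
  set Q : Matrix (Fin q × Fin m) (Fin q × Fin m) ℝ :=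
    (ld * lt) • 1 + lt • ((1 : Matrix (Fin q) (Fin q) ℝ) ⊗ₖ K)
      + ld • (G ⊗ₖ (1 : Matrix (Fin m) (Fin m) ℝ)) with hQdef
  -- transpose facts
  have hKt : Kᵀ = K := by
    ext i j
    have := congrFun (congrFun hK.1.eq i) j
    simpa [Matrix.conjTranspose_apply] using this
  have hGt : Gᵀ = G := by
    ext i j
    have := congrFun (congrFun hG.1.eq i) j
    simpa [Matrix.conjTranspose_apply] using this
  have hKK : (K * K).PosDef := by
    have := myPosDef_tmul_self hK.isUnit
    rwa [hKt] at this
  have hGG : (G * G).PosDef := by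
    have := myPosDef_tmul_self hG.isUnit
    rwa [hGt] at this
  -- kronecker multiplication facts
  have e1 : P * ((1 : Matrix (Fin q) (Fin q) ℝ) ⊗ₖ K) = G ⊗ₖ (K * K) := by
    rw [hPdef, ← Matrix.mul_kronecker_mul, mul_one]
  have e2 : ((1 : Matrix (Fin q) (Fin q) ℝ) ⊗ₖ K) * P = G ⊗ₖ (K * K) := by
    rw [hPdef, ← Matrix.mul_kronecker_mul, one_mul]
  have e3 : P * (G ⊗ₖ (1 : Matrix (Fin m) (Fin m) ℝ)) = (G * G) ⊗ₖ K := by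
    rw [hPdef, ← Matrix.mul_kronecker_mul, mul_one]
  have e4 : (G ⊗ₖ (1 : Matrix (Fin m) (Fin m) ℝ)) * P = (G * G) ⊗ₖ K := by
    rw [hPdef, ← Matrix.mul_kronecker_mul, one_mul]
  have hPQ : P * Q = (ld * lt) • P + lt • (G ⊗ₖ (K * K)) + ld • ((G * G) ⊗ₖ K) := by
    rw [hQdef, mul_add, mul_add, Matrix.mul_smul, Matrix.mul_smul, Matrix.mul_smul,
      mul_one, e1, e3]
  have hQP : Q * P = (ld * lt) • P + lt • (G ⊗ₖ (K * K)) + ld • ((G * G) ⊗ₖ K) := by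
    rw [hQdef, add_mul, add_mul, Matrix.smul_mul, Matrix.smul_mul, Matrix.smul_mul,
      one_mul, e2, e4]
  have hcomm : P * Q = Q * P := by rw [hPQ, hQP]
  -- positive definiteness
  have hPpos : P.PosDef := myPosDef_kron hG hK
  have hQPpos : (Q * P).PosDef := by
    rw [hQP]
    exact ((myPosDef_smul hPpos (mul_pos hld hlt)).add
      (myPosDef_smul (myPosDef_kron hG hKK) hlt)).add
      (myPosDef_smul (myPosDef_kron hGG hK) hld)
  have hQpos : Q.PosDef := by
    rw [hQdef]
    exact ((myPosDef_smul Matrix.PosDef.one (mul_pos hld hlt)).add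
      (myPosDef_smul (myPosDef_kron Matrix.PosDef.one hK) hlt)).add
      (myPosDef_smul (myPosDef_kron hG Matrix.PosDef.one) hld)
  have hQdet : IsUnit Q.det := (Matrix.isUnit_iff_isUnit_det Q).mp hQpos.isUnit
  -- Ξ = P * Q⁻¹
  have hΞ' : Ξ = P * Q⁻¹ := hΞ
  -- commuting with inverse
  have hcomm' : Q⁻¹ * P = P * Q⁻¹ := by
    calc Q⁻¹ * P = Q⁻¹ * P * (Q * Q⁻¹) := by rw [Matrix.mul_nonsing_inv Q hQdet, mul_one]
    _ = Q⁻¹ * (P * Q) * Q⁻¹ := by simp only [mul_assoc]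
    _ = Q⁻¹ * (Q * P) * Q⁻¹ := by rw [hcomm]
    _ = P * Q⁻¹ := by
          simp only [← mul_assoc]
          rw [Matrix.nonsing_inv_mul Q hQdet, one_mul]
  have hΞpos : Ξ.PosDef := by
    refine Matrix.PosDef.of_dotProduct_mulVec_pos ?_ ?_
    · show Ξᴴ = Ξ
      rw [hΞ', Matrix.conjTranspose_mul, hQpos.1.inv.eq, hPpos.1.eq, hcomm']
    · intro x hx
      set y : Fin q × Fin m → ℝ := Q⁻¹ *ᵥ x with hy
      have hyx : Q *ᵥ y = x := by
        rw [hy, mulVec_mulVec, Matrix.mul_nonsing_inv Q hQdet, one_mulVec]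
      have hy0 : y ≠ 0 := by
        intro h
        apply hx
        rw [← hyx, h, mulVec_zero]
      have hqp := hQPpos.dotProduct_mulVec_pos hy0
      rw [star_trivial] at hqp
      rw [star_trivial, hΞ', ← mulVec_mulVec, ← hy]
      calc x ⬝ᵥ P *ᵥ y = (Q *ᵥ y) ⬝ᵥ P *ᵥ y := by rw [hyx]
      _ = (P *ᵥ y) ⬝ᵥ (Q *ᵥ y) := dotProduct_comm _ _
      _ = ((P *ᵥ y) ᵥ* Q) ⬝ᵥ y := dotProduct_mulVec _ _ _
      _ = (Qᵀ *ᵥ (P *ᵥ y)) ⬝ᵥ y := by rw [mulVec_transpose]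
      _ = (Q *ᵥ (P *ᵥ y)) ⬝ᵥ y := by
            have : Qᵀ = Q := by
              ext i j
              have := congrFun (congrFun hQpos.1.eq i) j
              simpa [Matrix.conjTranspose_apply] using this
            rw [this]
      _ = y ⬝ᵥ (Q * P) *ᵥ y := by rw [dotProduct_comm, mulVec_mulVec]
      _ > 0 := hqp
  -- A := Ξ + 1
  have hApos : (Ξ + 1).PosDef := hΞpos.add Matrix.PosDef.one
  have hAdet : IsUnit (Ξ + 1).det := (Matrix.isUnit_iff_isUnit_det _).mp hApos.isUnit
  have hBpos : ((Ξ + 1)⁻¹).PosDef := hApos.inv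
  -- part 1
  have hGl : (G + lt • 1).PosDef := hG.add (myPosDef_smul Matrix.PosDef.one hlt)
  have hKl : (K + ld • 1).PosDef := hK.add (myPosDef_smul Matrix.PosDef.one hld)
  have hGldet : IsUnit (G + lt • 1).det := (Matrix.isUnit_iff_isUnit_det _).mp hGl.isUnit
  have hKldet : IsUnit (K + ld • 1).det := (Matrix.isUnit_iff_isUnit_det _).mp hKl.isUnit
  have hR : (G + lt • 1) ⊗ₖ (K + ld • 1) = P + Q := by
    rw [hPdef, hQdef]
    rw [Matrix.add_kronecker, Matrix.kronecker_add, Matrix.kronecker_add,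
      Matrix.smul_kronecker, Matrix.smul_kronecker, Matrix.kronecker_smul,
      Matrix.kronecker_smul, Matrix.one_kronecker_one, smul_smul, mul_comm lt ld]
    abel
  have hRpos : ((G + lt • 1) ⊗ₖ (K + ld • 1)).PosDef := myPosDef_kron hGl hKl
  have hRdet : IsUnit ((G + lt • 1) ⊗ₖ (K + ld • 1)).det :=
    (Matrix.isUnit_iff_isUnit_det _).mp hRpos.isUnit
  have hΞ1 : Ξ + 1 = ((G + lt • 1) ⊗ₖ (K + ld • 1)) * Q⁻¹ := by
    rw [hR, add_mul, hΞ', Matrix.mul_nonsing_inv Q hQdet]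
  have part1 : H = (G * (G + lt • 1)⁻¹) ⊗ₖ (K * (K + ld • 1)⁻¹) := by
    rw [hH, hΞ1, Matrix.mul_inv_rev, Matrix.nonsing_inv_nonsing_inv Q hQdet, hΞ',
      mul_assoc, ← mul_assoc Q⁻¹, Matrix.nonsing_inv_mul Q hQdet, one_mul,
      Matrix.inv_kronecker, hPdef, ← Matrix.mul_kronecker_mul]
  refine ⟨part1, ?_⟩
  -- part 2
  have hH1B : H = 1 - (Ξ + 1)⁻¹ := by
    have hΞeq : Ξ = (Ξ + 1) - 1 := by abel
    rw [hH]
    nth_rewrite 1 [hΞeq]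
    rw [Matrix.sub_mul, Matrix.mul_nonsing_inv _ hAdet, one_mul]
  intro s Ξdel hΞdel ydel hydel ξs hξs
  set B : Matrix (Fin q × Fin m) (Fin q × Fin m) ℝ := (Ξ + 1)⁻¹ with hBdef
  have hBA : B * (Ξ + 1) = 1 := Matrix.nonsing_inv_mul _ hAdet
  set Adel : Matrix {x : Fin q × Fin m // x ≠ s} {x : Fin q × Fin m // x ≠ s} ℝ :=
    (Ξ + 1).submatrix (fun x => x.val) (fun x => x.val) with hAdeldef
  have hAdelpos : Adel.PosDef := myPosDef_submatrix hApos _ Subtype.val_injective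
  have hAdeldet : IsUnit Adel.det := (Matrix.isUnit_iff_isUnit_det _).mp hAdelpos.isUnit
  have hsub : Ξdel + 1 = Adel := by
    rw [hΞdel, hAdeldef]
    ext a b
    simp only [Matrix.add_apply, Matrix.submatrix_apply, Matrix.one_apply, Subtype.coe_inj]
  have hAC : Adel * Adel⁻¹ = 1 := Matrix.mul_nonsing_inv _ hAdeldet
  -- row of B
  set u : {x : Fin q × Fin m // x ≠ s} → ℝ := fun x => B s x.val with hudef
  have hξA : ∀ t : {x : Fin q × Fin m // x ≠ s}, ξs t = (Ξ + 1) s t.val := by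
    intro t
    rw [hξs]
    simp [Matrix.add_apply, Matrix.one_apply_ne (Ne.symm t.prop)]
  have hu : u ᵥ* Adel = (-(B s s)) • ξs := by
    funext t
    have h0 : (B * (Ξ + 1)) s t.val = 0 := by
      rw [hBA, Matrix.one_apply_ne (Ne.symm t.prop)]
    have hsum : (∑ k, B s k * (Ξ + 1) k t.val) = 0 := h0
    rw [mySum_split s (fun k => B s k * (Ξ + 1) k t.val)] at hsum
    have : (u ᵥ* Adel) t = ∑ k : {x : Fin q × Fin m // x ≠ s}, B s k.val * (Ξ + 1) k.val t.val := by
      simp only [Matrix.vecMul, dotProduct, hudef, hAdeldef, Matrix.submatrix_apply]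
    rw [this]
    have := hsum
    rw [Pi.smul_apply, smul_eq_mul, hξA t]
    linarith
  have hurow : u = (-(B s s)) • (ξs ᵥ* Adel⁻¹) := by
    calc u = u ᵥ* 1 := (Matrix.vecMul_one u).symm
    _ = u ᵥ* (Adel * Adel⁻¹) := by rw [hAC]
    _ = (u ᵥ* Adel) ᵥ* Adel⁻¹ := (Matrix.vecMul_vecMul u Adel Adel⁻¹).symm
    _ = ((-(B s s)) • ξs) ᵥ* Adel⁻¹ := by rw [hu]
    _ = (-(B s s)) • (ξs ᵥ* Adel⁻¹) := Matrix.smul_vecMul _ _ _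
  -- diagonal
  have hBss : 0 < B s s := myPosDef_diag hBpos s
  have hHss : H s s = 1 - B s s := by
    rw [hH1B]
    simp [Matrix.sub_apply, Matrix.one_apply_eq]
  have hHst : ∀ t : {x : Fin q × Fin m // x ≠ s}, H s t.val = - B s t.val := by
    intro t
    rw [hH1B]
    simp [Matrix.sub_apply, Matrix.one_apply_ne (Ne.symm t.prop)]
  -- LHS
  have hLHS : ξs ⬝ᵥ ((Ξdel + 1)⁻¹ *ᵥ ydel) = (ξs ᵥ* Adel⁻¹) ⬝ᵥ ydel := by
    rw [hsub, dotProduct_mulVec]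
  -- RHS numerator
  have hnum : (H *ᵥ vecCols Y) s - H s s * Y s.2 s.1
      = B s s * ((ξs ᵥ* Adel⁻¹) ⬝ᵥ ydel) := by
    have hmv : (H *ᵥ vecCols Y) s = ∑ t, H s t * vecCols Y t := rfl
    rw [hmv, mySum_split s (fun t => H s t * vecCols Y t)]
    have hYs : vecCols Y s = Y s.2 s.1 := rfl
    rw [hYs]
    have : (∑ t : {x : Fin q × Fin m // x ≠ s}, H s t.val * vecCols Y t.val)
        = B s s * ((ξs ᵥ* Adel⁻¹) ⬝ᵥ ydel) := by
      rw [dotProduct, Finset.mul_sum]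
      refine Finset.sum_congr rfl fun t _ => ?_
      rw [hHst t, hydel]
      have hut : B s t.val = (-(B s s)) * (ξs ᵥ* Adel⁻¹) t := by
        have := congrFun hurow t
        simpa [hudef] using this
      rw [hut]
      ring
    rw [← this]
    ring
  rw [hLHS, hnum, hHss]
  have hden : 1 - (1 - B s s) = B s s := by ring
  rw [hden]
  exact (mul_div_cancel_left₀ _ hBss.ne').symm
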